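/- Every proper two-sided ideal of the Jordan plane R = k⟨x,y⟩/(xy - yx - y²) that is nonzero contains a nonzero polynomial in y. -/

import Mathlib

/-- The defining relation of the Jordan plane: `x * y = y * x + y * y`. -/
inductive JordanRel (k : Type) [Field k] : FreeAlgebra k Bool → FreeAlgebra k Bool → Prop
  | rel : JordanRel k (FreeAlgebra.ι k true * FreeAlgebra.ι k false)
      (FreeAlgebra.ι k false * FreeAlgebra.ι k true + FreeAlgebra.ι k false * FreeAlgebra.ι k false)

/-- The Jordan plane `R = k⟨x,y⟩/(xy - yx - y²)`. -/
abbrev JordanPlane (k : Type) [Field k] := RingQuot (JordanRel k)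

/-- The generator `x` of the Jordan plane. -/
noncomputable def jx (k : Type) [Field k] : JordanPlane k :=
  RingQuot.mkAlgHom k (JordanRel k) (FreeAlgebra.ι k true)

/-- The generator `y` of the Jordan plane. -/
noncomputable def jy (k : Type) [Field k] : JordanPlane k :=
  RingQuot.mkAlgHom k (JordanRel k) (FreeAlgebra.ι k false)

namespace JP

open Polynomial

variable {k : Type} [Field k]

lemma rel1 : jx k * jy k = jy k * jx k + jy k * jy k := by
  have h := RingQuot.mkAlgHom_rel k (JordanRel.rel (k := k))
  simpa only [jx, jy, map_mul, map_add] using h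

lemma comm_pow (n : ℕ) :
    jx k * jy k ^ n = jy k ^ n * jx k + n • (jy k ^ (n + 1)) := by
  induction n with
  | zero => simp
  | succ n ih =>
    calc jx k * jy k ^ (n+1) = (jx k * jy k ^ n) * jy k := by rw [mul_assoc, pow_succ]
    _ = (jy k ^ n * jx k) * jy k + n • (jy k ^ (n+1) * jy k) := by
        rw [ih, add_mul, smul_mul_assoc]
    _ = jy k ^ n * (jy k * jx k + jy k * jy k) + n • jy k ^ (n+2) := by
        rw [mul_assoc, rel1, ← pow_succ]
    _ = jy k ^ (n+1) * jx k + (n+1) • jy k ^ (n+2) := by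
        rw [mul_add, ← mul_assoc, ← pow_succ, ← mul_assoc, ← pow_succ, succ_nsmul, ← pow_succ]
        abel

lemma comm_aeval (p : Polynomial k) :
    jx k * aeval (jy k) p
      = aeval (jy k) p * jx k + aeval (jy k) (X ^ 2 * derivative p) := by
  induction p using Polynomial.induction_on' with
  | add p q hp hq =>
    rw [map_add, mul_add, hp, hq, derivative_add, mul_add, map_add, add_mul]
    abel
  | monomial n a =>
    rw [aeval_monomial, derivative_monomial, X_pow_mul_monomial, aeval_monomial]
    cases n with
    | zero =>
      simp [← mul_assoc, Algebra.commutes (A := JordanPlane k) a (jx k)]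
    | succ n =>
      have h1 : n + 1 - 1 + 2 = n + 2 := by omega
      rw [h1]
      calc jx k * ((algebraMap k (JordanPlane k)) a * jy k ^ (n+1))
          = (algebraMap k (JordanPlane k)) a * (jx k * jy k ^ (n+1)) := by
            rw [← mul_assoc, ← Algebra.commutes a (jx k), mul_assoc]
        _ = (algebraMap k (JordanPlane k)) a * (jy k ^ (n+1) * jx k)
            + (algebraMap k (JordanPlane k)) a * ((n+1) • jy k ^ (n+2)) := by
            rw [comm_pow, mul_add]
        _ = (algebraMap k (JordanPlane k)) a * jy k ^ (n+1) * jx k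
            + (algebraMap k (JordanPlane k)) a
              * ((algebraMap k (JordanPlane k)) (↑(n+1)) * jy k ^ (n+2)) := by
            rw [mul_assoc]
            congr 2
        _ = _ := by rw [← mul_assoc, map_mul]

lemma jy_comm_aeval (p : Polynomial k) :
    jy k * aeval (jy k) p = aeval (jy k) p * jy k := by
  have h1 : jy k * aeval (jy k) p = aeval (jy k) (X * p) := by
    rw [map_mul, aeval_X]
  have h2 : aeval (jy k) p * jy k = aeval (jy k) (p * X) := by
    rw [map_mul, aeval_X]
  rw [h1, h2, mul_comm]

/-- Normal form evaluation: `v F = ∑ aeval (jy k) (F.coeff j) * jx k ^ j`. -/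
noncomputable def v (F : Polynomial (Polynomial k)) : JordanPlane k :=
  Polynomial.eval₂ (Polynomial.aeval (jy k)).toRingHom (jx k) F

lemma v_add (F G : Polynomial (Polynomial k)) : v (F + G) = v F + v G :=
  Polynomial.eval₂_add _ _

lemma v_zero : v (0 : Polynomial (Polynomial k)) = 0 := Polynomial.eval₂_zero _ _

lemma v_monomial (n : ℕ) (a : Polynomial k) :
    v (monomial n a) = aeval (jy k) a * jx k ^ n := by
  simp [v, Polynomial.eval₂_monomial]

lemma v_C (p : Polynomial k) : v (C p) = aeval (jy k) p := by
  simp [v]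

lemma v_X : v (X : Polynomial (Polynomial k)) = jx k := by
  simp [v]

lemma v_sum_range {F : Polynomial (Polynomial k)} {N : ℕ} (h : F.natDegree < N) :
    v F = ∑ j ∈ Finset.range N, aeval (jy k) (F.coeff j) * jx k ^ j := by
  simpa [v] using Polynomial.eval₂_eq_sum_range' (Polynomial.aeval (jy k)).toRingHom h (jx k)

lemma v_Cmul (p : Polynomial k) (G : Polynomial (Polynomial k)) :
    aeval (jy k) p * v G = v (C p * G) := by
  induction G using Polynomial.induction_on' with
  | add f g hf hg => rw [v_add, mul_add, hf, hg, mul_add, v_add]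
  | monomial n a => rw [v_monomial, C_mul_monomial, v_monomial, ← mul_assoc, ← map_mul]

/-- coefficientwise `a ↦ X^2 * a'` -/
noncomputable def dop (G : Polynomial (Polynomial k)) : Polynomial (Polynomial k) :=
  G.sum fun j a => monomial j (X ^ 2 * derivative a)

lemma dop_add (f g : Polynomial (Polynomial k)) : dop (f + g) = dop f + dop g := by
  unfold dop
  rw [Polynomial.sum_add_index]
  · intro i; simp
  · intro i b c; rw [derivative_add, mul_add, map_add]

lemma dop_monomial (n : ℕ) (a : Polynomial k) :
    dop (monomial n a) = monomial n (X ^ 2 * derivative a) := by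
  unfold dop
  rw [Polynomial.sum_monomial_index]
  simp

lemma dop_degree (G : Polynomial (Polynomial k)) : (dop G).degree ≤ G.degree := by
  unfold dop
  rw [Polynomial.sum]
  refine (degree_sum_le _ _).trans ?_
  refine Finset.sup_le fun j hj => ?_
  exact (degree_monomial_le _ _).trans (le_degree_of_ne_zero (mem_support_iff.mp hj))

lemma jx_mul_v (G : Polynomial (Polynomial k)) :
    jx k * v G = v (X * G + dop G) := by
  induction G using Polynomial.induction_on' with
  | add f g hf hg =>
    rw [v_add, mul_add, hf, hg, dop_add, ← v_add]
    congr 1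
    ring
  | monomial n a =>
    rw [dop_monomial, ← pow_one (X : Polynomial (Polynomial k)), X_pow_mul_monomial, v_add,
      v_monomial, v_monomial, v_monomial, ← mul_assoc, comm_aeval, add_mul, mul_assoc, ← pow_succ']

lemma XG_dop_degree (G : Polynomial (Polynomial k)) :
    (X * G + dop G).degree ≤ G.degree + 1 := by
  refine (degree_add_le _ _).trans (max_le ?_ ?_)
  · rw [degree_mul, degree_X, add_comm]
  · exact (dop_degree G).trans (le_add_of_nonneg_right zero_le_one)

lemma jx_pow_mul_v (n : ℕ) (G : Polynomial (Polynomial k)) :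
    ∃ H, jx k ^ n * v G = v H ∧ H.degree ≤ G.degree + n := by
  induction n generalizing G with
  | zero => exact ⟨G, by simp, by simp⟩
  | succ n ih =>
    obtain ⟨H, eH, dH⟩ := ih (X * G + dop G)
    refine ⟨H, ?_, ?_⟩
    · rw [pow_succ, mul_assoc, jx_mul_v, eH]
    · refine dH.trans ?_
      refine (add_le_add_left (XG_dop_degree G) _).trans ?_
      rw [add_assoc]
      push_cast
      rw [add_comm (1 : WithBot ℕ) (n : WithBot ℕ)]

lemma v_sum {ι : Type*} (s : Finset ι) (f : ι → Polynomial (Polynomial k)) :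
    v (∑ i ∈ s, f i) = ∑ i ∈ s, v (f i) :=
  Polynomial.eval₂_finset_sum _ _ _ _

lemma v_mul_v (F G : Polynomial (Polynomial k)) : ∃ H, v F * v G = v H := by
  induction F using Polynomial.induction_on' with
  | add f g hf hg =>
    obtain ⟨Hf, ef⟩ := hf
    obtain ⟨Hg, eg⟩ := hg
    exact ⟨Hf + Hg, by rw [v_add, add_mul, ef, eg, v_add]⟩
  | monomial n p =>
    obtain ⟨H, eH, -⟩ := jx_pow_mul_v n G
    exact ⟨C p * H, by rw [v_monomial, mul_assoc, eH, v_Cmul]⟩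

lemma v_surjective (a : JordanPlane k) : ∃ F, v F = a := by
  obtain ⟨z, rfl⟩ := RingQuot.mkAlgHom_surjective k (JordanRel k) a
  induction z using FreeAlgebra.induction with
  | grade0 r =>
    refine ⟨C (C r), ?_⟩
    rw [v_C, aeval_C, AlgHom.commutes]
  | grade1 b =>
    cases b with
    | true => exact ⟨X, v_X⟩
    | false => exact ⟨C X, by rw [v_C, aeval_X]; rfl⟩
  | mul x y hx hy =>
    obtain ⟨Fx, ex⟩ := hx
    obtain ⟨Fy, ey⟩ := hy
    obtain ⟨H, eH⟩ := v_mul_v Fx Fy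
    exact ⟨H, by rw [← eH, ex, ey, map_mul]⟩
  | add x y hx hy =>
    obtain ⟨Fx, ex⟩ := hx
    obtain ⟨Fy, ey⟩ := hy
    exact ⟨Fx + Fy, by rw [v_add, ex, ey, map_add]⟩

lemma deg_succ_lt {d : WithBot ℕ} {j : ℕ} (h : d < (j : ℕ)) :
    d + 1 < ((j + 1 : ℕ) : WithBot ℕ) := by
  cases d with
  | bot => simpa using WithBot.bot_lt_coe (j+1)
  | coe m =>
    simp only [Nat.cast_withBot, Nat.cast_id] at h ⊢
    have hm : m < j := WithBot.coe_lt_coe.mp h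
    rw [← WithBot.coe_one, ← WithBot.coe_add]
    exact WithBot.coe_lt_coe.mpr (Nat.succ_lt_succ hm)

lemma comm_jy_pow (j : ℕ) :
    ∃ H, jy k * jx k ^ j - jx k ^ j * jy k = v H ∧ H.degree < ((j : ℕ) : WithBot ℕ) := by
  induction j with
  | zero => exact ⟨0, by simp [v_zero], by simpa using WithBot.bot_lt_coe 0⟩
  | succ j ih =>
    obtain ⟨H, eH, dH⟩ := ih
    refine ⟨monomial j (-(X ^ 2)) + (X * H + dop H), ?_, ?_⟩
    · have expand : jy k * jx k ^ (j+1) - jx k ^ (j+1) * jy k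
          = (jy k * jx k - jx k * jy k) * jx k ^ j
            + jx k * (jy k * jx k ^ j - jx k ^ j * jy k) := by
        rw [pow_succ']
        simp only [sub_mul, mul_sub, mul_assoc]
        abel
      have h1 : jy k * jx k - jx k * jy k = -(jy k * jy k) := by
        rw [rel1]; abel
      rw [expand, h1, eH, jx_mul_v, v_add, v_add, v_monomial]
      congr 1
      · rw [map_neg, map_pow, aeval_X, ← pow_two]
      · rw [v_add]
    · refine (degree_add_le _ _).trans_lt (max_lt ?_ ?_)
      · exact (degree_monomial_le _ _).trans_lt (by exact_mod_cast Nat.lt_succ_self j)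
      · exact (XG_dop_degree H).trans_lt (deg_succ_lt dH)

lemma comm_jy_v (n : ℕ) (F : Polynomial (Polynomial k)) (hF : F.natDegree ≤ n) :
    ∃ H, jy k * v F - v F * jy k = v H ∧ H.degree < ((n : ℕ) : WithBot ℕ) := by
  choose Hk eHk dHk using fun j => comm_jy_pow (k := k) j
  refine ⟨∑ j ∈ Finset.range (n+1), C (F.coeff j) * Hk j, ?_, ?_⟩
  · rw [v_sum_range (Nat.lt_succ_of_le hF), Finset.mul_sum, Finset.sum_mul,
      ← Finset.sum_sub_distrib, v_sum]
    refine Finset.sum_congr rfl fun j hj => ?_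
    rw [← v_Cmul, ← eHk j, mul_sub]
    congr 1
    · rw [← mul_assoc, jy_comm_aeval, mul_assoc]
    · rw [mul_assoc]
  · refine (degree_sum_le _ _).trans_lt ?_
    rw [Finset.sup_lt_iff (by exact WithBot.bot_lt_coe n)]
    intro j hj
    refine (degree_mul_le _ _).trans_lt ?_
    have h1 : (C (F.coeff j)).degree + (Hk j).degree ≤ (Hk j).degree := by
      calc (C (F.coeff j)).degree + (Hk j).degree
          ≤ 0 + (Hk j).degree := add_le_add_left (degree_C_le) _
        _ = (Hk j).degree := zero_add _
    refine h1.trans_lt ((dHk j).trans_le ?_)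
    exact_mod_cast Nat.lt_succ_iff.mp (Finset.mem_range.mp hj)

noncomputable def DY : Module.End k (Polynomial k) := Algebra.lmul k (Polynomial k) X

noncomputable def DX : Module.End k (Polynomial k) :=
  Algebra.lmul k (Polynomial k) (X ^ 2) ∘ₗ (derivative : Polynomial k →ₗ[k] Polynomial k)

lemma DY_apply (p : Polynomial k) : DY p = X * p := by
  simp [DY, Algebra.lmul]

lemma DX_apply (p : Polynomial k) : DX p = X ^ 2 * derivative p := by
  simp [DX, Algebra.lmul, LinearMap.comp_apply]

lemma D_rel : DX * DY = DY * DX + DY * (DY : Module.End k (Polynomial k)) := by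
  apply LinearMap.ext
  intro p
  show DX (DY p) = DY (DX p) + DY (DY p)
  rw [DX_apply, DY_apply, DY_apply, DY_apply, DX_apply, derivative_mul, derivative_X]
  ring

noncomputable def Phi : JordanPlane k →ₐ[k] Module.End k (Polynomial k) :=
  RingQuot.liftAlgHom k ⟨FreeAlgebra.lift k (fun b => if b then DX else DY), by
    rintro x y ⟨⟩
    simp only [map_mul, map_add, FreeAlgebra.lift_ι_apply, if_true, if_false, Bool.false_eq_true]
    exact D_rel⟩

lemma Phi_jx : Phi (jx k) = DX := by
  rw [jx, Phi, RingQuot.liftAlgHom_mkAlgHom_apply]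
  simp

lemma Phi_jy : Phi (jy k) = DY := by
  rw [jy, Phi, RingQuot.liftAlgHom_mkAlgHom_apply]
  simp

lemma Phi_aeval (p : Polynomial k) :
    Phi (aeval (jy k) p) = Algebra.lmul k (Polynomial k) p := by
  have h1 : Phi (aeval (jy k) p) = aeval (Phi (jy k)) p :=
    (Polynomial.aeval_algHom_apply Phi (jy k) p).symm
  rw [h1, Phi_jy, DY]
  rw [Polynomial.aeval_algHom_apply (Algebra.lmul k (Polynomial k)) X p, aeval_X_left_apply]

lemma DX_X_pow (m : ℕ) : DX ((X : Polynomial k) ^ m) = m • X ^ (m + 1) := by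
  rw [DX_apply, derivative_X_pow]
  cases m with
  | zero => simp
  | succ m =>
    rw [nsmul_eq_mul]
    push_cast
    rw [map_add, map_one, Polynomial.C_eq_natCast]
    ring

lemma DX_pow_apply (j m : ℕ) :
    (DX ^ j) ((X : Polynomial k) ^ m)
      = ((∏ i ∈ Finset.range j, (m + i)) : ℕ) • X ^ (m + j) := by
  induction j with
  | zero => simp
  | succ j ih =>
    rw [pow_succ', Module.End.mul_apply, ih, map_nsmul, DX_X_pow, smul_smul,
      Finset.prod_range_succ]
    rfl

lemma Phi_v_apply (F : Polynomial (Polynomial k)) {N : ℕ} (h : F.natDegree < N) (m : ℕ) :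
    Phi (v F) ((X : Polynomial k) ^ m)
      = ∑ j ∈ Finset.range N,
          ((∏ i ∈ Finset.range j, (m + i)) : ℕ) • (F.coeff j * X ^ (m + j)) := by
  rw [v_sum_range h, map_sum, LinearMap.sum_apply]
  refine Finset.sum_congr rfl fun j hj => ?_
  rw [map_mul, Phi_aeval, map_pow Phi (jx k) j, Phi_jx, Module.End.mul_apply, DX_pow_apply,
    map_nsmul]
  congr 1

/-- `Ap j = ∏_{i<j} (X + i)`. -/
noncomputable def Ap (k : Type) [Field k] (j : ℕ) : Polynomial k :=
  ∏ i ∈ Finset.range j, (X + C (i : k))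

lemma Ap_monic (j : ℕ) : (Ap k j).Monic :=
  monic_prod_of_monic _ _ fun i _ => monic_X_add_C _

lemma Ap_natDegree (j : ℕ) : (Ap k j).natDegree = j := by
  rw [Ap, natDegree_prod]
  · simp only [natDegree_X_add_C, Finset.sum_const, smul_eq_mul, mul_one, Finset.card_range]
  · intro i _
    exact (monic_X_add_C _).ne_zero

lemma Ap_eval_nat (j m : ℕ) :
    (Ap k j).eval ((m : ℕ) : k) = ((∏ i ∈ Finset.range j, (m + i) : ℕ) : k) := by
  rw [Ap, eval_prod]
  push_cast
  simp

lemma tri (M : ℕ) (s : ℕ → Polynomial k)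
    (hs : (∑ j ∈ Finset.range M, C (s j) * (Ap k j).map C) = 0) : ∀ j < M, s j = 0 := by
  induction M generalizing s with
  | zero => intro j hj; omega
  | succ M ih =>
    have hM : s M = 0 := by
      have h0 := congrArg (fun P => Polynomial.coeff P M) hs
      simp only [Polynomial.finset_sum_coeff, coeff_C_mul, coeff_map, coeff_zero] at h0
      rw [Finset.sum_range_succ] at h0
      have hz : ∀ j ∈ Finset.range M, s j * C ((Ap k j).coeff M) = 0 := by
        intro j hj
        rw [coeff_eq_zero_of_natDegree_lt (by rw [Ap_natDegree]; exact Finset.mem_range.mp hj)]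
        simp
      rw [Finset.sum_eq_zero hz, zero_add] at h0
      have hlc : (Ap k M).coeff M = 1 := by
        have := (Ap_monic (k := k) M).coeff_natDegree
        rwa [Ap_natDegree] at this
      rw [hlc] at h0
      simpa using h0
    intro j hj
    rcases Nat.lt_succ_iff_lt_or_eq.mp hj with h | h
    · refine ih s ?_ j h
      rw [Finset.sum_range_succ, hM] at hs
      simpa using hs
    · rw [h]; exact hM

lemma vand [CharZero k] (M : ℕ) (s : ℕ → Polynomial k)
    (h : ∀ m : ℕ, ∑ j ∈ Finset.range M,
        (((∏ i ∈ Finset.range j, (m + 1 + i)) : ℕ) : k) • s j = 0) :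
    ∀ j < M, s j = 0 := by
  set G : Polynomial (Polynomial k) := ∑ j ∈ Finset.range M, C (s j) * (Ap k j).map C with hG
  have hev : ∀ m : ℕ, G.eval (C (((m + 1 : ℕ)) : k)) = 0 := by
    intro m
    rw [hG, Polynomial.eval_finset_sum, ← h m]
    refine Finset.sum_congr rfl fun j hj => ?_
    rw [eval_mul, eval_C, eval_map, Polynomial.eval₂_at_apply, Ap_eval_nat, smul_eq_C_mul,
      mul_comm]
  have hinj : Function.Injective fun m : ℕ => (((m + 1 : ℕ)) : k) := by
    intro a b hab
    have := Nat.cast_injective (R := k) hab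
    omega
  have hmap : ∀ a : k, G.map (evalRingHom a) = 0 := by
    intro a
    apply Polynomial.eq_zero_of_infinite_isRoot
    refine Set.Infinite.mono ?_ (Set.infinite_range_of_injective hinj)
    rintro _ ⟨m, rfl⟩
    show Polynomial.IsRoot _ _
    rw [Polynomial.IsRoot.def, eval_map]
    show Polynomial.eval₂ (evalRingHom a) (((m + 1 : ℕ)) : k) G = 0
    have hcast : (((m + 1 : ℕ)) : k) = evalRingHom a (C (((m + 1 : ℕ)) : k)) := by simp
    rw [hcast, Polynomial.eval₂_at_apply, hev m, map_zero]
  have hGzero : G = 0 := by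
    apply Polynomial.ext
    intro n
    rw [coeff_zero]
    apply Polynomial.zero_of_eval_zero
    intro a
    have h1 := congrArg (fun P => Polynomial.coeff P n) (hmap a)
    simpa [coeff_map] using h1
  exact tri M s (hG ▸ hGzero)

lemma coeff_eq_zero_of_central [CharZero k] (F : Polynomial (Polynomial k))
    (hyv : jy k * v F = v F * jy k) : ∀ j, 1 ≤ j → F.coeff j = 0 := by
  set d := F.natDegree with hd
  have hdN : F.natDegree < d + 1 := Nat.lt_succ_self d
  have e1 : ∀ m : ℕ,
      (X : Polynomial k) * ∑ j ∈ Finset.range (d+1),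
          ((∏ i ∈ Finset.range j, (m + i)) : ℕ) • (F.coeff j * X ^ (m + j))
      = ∑ j ∈ Finset.range (d+1),
          ((∏ i ∈ Finset.range j, (m + 1 + i)) : ℕ) • (F.coeff j * X ^ (m + 1 + j)) := by
    intro m
    have h2 := congrArg (fun z => Phi z ((X : Polynomial k) ^ m)) hyv
    simp only [map_mul, Phi_jy, Module.End.mul_apply] at h2
    rw [Phi_v_apply F hdN m, DY_apply, DY_apply, ← pow_succ', Phi_v_apply F hdN (m+1)] at h2
    exact h2
  have e2 : ∀ m : ℕ, ∑ j ∈ Finset.range (d+1),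
      ((((∏ i ∈ Finset.range j, (m + 1 + i)) : ℕ) : k)
        - (((∏ i ∈ Finset.range j, (m + i)) : ℕ) : k)) • (F.coeff j * X ^ (j + 1)) = 0 := by
    intro m
    have h3 := e1 m
    have hL : (X : Polynomial k) * ∑ j ∈ Finset.range (d+1),
          ((∏ i ∈ Finset.range j, (m + i)) : ℕ) • (F.coeff j * X ^ (m + j))
        = X ^ m * ∑ j ∈ Finset.range (d+1),
          (((∏ i ∈ Finset.range j, (m + i)) : ℕ) : k) • (F.coeff j * X ^ (j + 1)) := by
      rw [Finset.mul_sum, Finset.mul_sum]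
      refine Finset.sum_congr rfl fun j _ => ?_
      rw [mul_smul_comm, mul_smul_comm, Nat.cast_smul_eq_nsmul]
      congr 1
      ring
    have hR : (∑ j ∈ Finset.range (d+1),
          ((∏ i ∈ Finset.range j, (m + 1 + i)) : ℕ) • (F.coeff j * X ^ (m + 1 + j)))
        = X ^ m * ∑ j ∈ Finset.range (d+1),
          (((∏ i ∈ Finset.range j, (m + 1 + i)) : ℕ) : k) • (F.coeff j * X ^ (j + 1)) := by
      rw [Finset.mul_sum]
      refine Finset.sum_congr rfl fun j _ => ?_
      rw [mul_smul_comm, Nat.cast_smul_eq_nsmul]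
      congr 1
      ring
    rw [hL, hR] at h3
    have h4 := (mul_left_cancel₀ (pow_ne_zero m (X_ne_zero (R := k))) h3).symm
    rw [← sub_eq_zero] at h4
    rw [← h4, ← Finset.sum_sub_distrib]
    refine Finset.sum_congr rfl fun j _ => ?_
    rw [sub_smul]
  have e3 : ∀ m : ℕ, ∑ j ∈ Finset.range d,
      (((∏ i ∈ Finset.range j, (m + 1 + i)) : ℕ) : k)
        • ((((j + 1 : ℕ)) : k) • (F.coeff (j+1) * X ^ (j + 2))) = 0 := by
    intro m
    have h4 := e2 m
    rw [Finset.sum_range_succ'] at h4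
    have hf0 : ((((∏ i ∈ Finset.range 0, (m + 1 + i)) : ℕ) : k)
        - (((∏ i ∈ Finset.range 0, (m + i)) : ℕ) : k)) • (F.coeff 0 * X ^ (0 + 1)) = 0 := by
      simp
    rw [hf0, add_zero] at h4
    rw [← h4]
    refine Finset.sum_congr rfl fun j _ => ?_
    have hp : ∏ i ∈ Finset.range j, (m + (i+1)) = ∏ i ∈ Finset.range j, (m + 1 + i) :=
      Finset.prod_congr rfl fun i _ => by omega
    have hcoef : ((∏ i ∈ Finset.range (j+1), (m + 1 + i) : ℕ) : k)
          - ((∏ i ∈ Finset.range (j+1), (m + i) : ℕ) : k)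
        = (((∏ i ∈ Finset.range j, (m + 1 + i)) : ℕ) : k) * (((j + 1 : ℕ)) : k) := by
      rw [Finset.prod_range_succ, Finset.prod_range_succ', hp]
      push_cast
      ring
    rw [smul_smul, ← hcoef]
  have hvd := vand d (fun j => (((j + 1 : ℕ)) : k) • (F.coeff (j+1) * X ^ (j + 2))) e3
  intro j hj
  by_cases hjd : j ≤ d
  · obtain ⟨i, rfl⟩ : ∃ i, j = i + 1 := ⟨j - 1, by omega⟩
    have h5 := hvd i (by omega)
    rcases smul_eq_zero.mp h5 with h6 | h6
    · exact absurd h6 (by exact_mod_cast Nat.succ_ne_zero i)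
    · rcases mul_eq_zero.mp h6 with h7 | h7
      · exact h7
      · exact absurd h7 (pow_ne_zero _ (X_ne_zero (R := k)))
  · exact coeff_eq_zero_of_natDegree_lt (by omega)

end JP

theorem nonzero_proper_ideal_contains_poly_in_y (k : Type) [Field k] [CharZero k]
    (I : TwoSidedIdeal (JordanPlane k)) (hne : I ≠ ⊥) (hproper : I ≠ ⊤) :
    ∃ p : Polynomial k,
      Polynomial.aeval (jy k) p ∈ I ∧ Polynomial.aeval (jy k) p ≠ 0 := by
  classical
  have hex : ∃ a : JordanPlane k, a ∈ I ∧ a ≠ 0 := by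
    by_contra h
    push_neg at h
    apply hne
    refine le_antisymm ?_ bot_le
    intro x hx
    rw [TwoSidedIdeal.mem_bot]
    exact h x hx
  obtain ⟨a, haI, ha0⟩ := hex
  obtain ⟨F0, hF0⟩ := JP.v_surjective a
  have hT0 : ∃ n, ∃ F : Polynomial (Polynomial k),
      JP.v F ∈ I ∧ JP.v F ≠ 0 ∧ F.natDegree ≤ n :=
    ⟨F0.natDegree, F0, by rw [hF0]; exact haI, by rw [hF0]; exact ha0, le_rfl⟩
  set n := Nat.find hT0 with hn
  obtain ⟨F, hFI, hFne, hFdeg⟩ := Nat.find_spec hT0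
  have hmain : ∀ G : Polynomial (Polynomial k), G.natDegree = 0 →
      JP.v G ∈ I → JP.v G ≠ 0 → ∃ p : Polynomial k,
        Polynomial.aeval (jy k) p ∈ I ∧ Polynomial.aeval (jy k) p ≠ 0 := by
    intro G hGdeg hGI hGne
    have hGC : G = Polynomial.C (G.coeff 0) :=
      Polynomial.eq_C_of_natDegree_le_zero (le_of_eq hGdeg)
    refine ⟨G.coeff 0, ?_, ?_⟩
    · rw [← JP.v_C, ← hGC]; exact hGI
    · rw [← JP.v_C, ← hGC]; exact hGne
  by_cases hn0 : n = 0
  · exact hmain F (by omega) hFI hFne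
  · exfalso
    set b := jy k * JP.v F - JP.v F * jy k with hb
    have hbI : b ∈ I :=
      I.sub_mem (I.mul_mem_left _ _ hFI) (I.mul_mem_right _ _ hFI)
    obtain ⟨H, hHeq, hHdeg⟩ := JP.comm_jy_v n F hFdeg
    by_cases hbz : b = 0
    · -- commutes with y: all higher coefficients vanish, so degree 0, contradicting minimality
      have hyv : jy k * JP.v F = JP.v F * jy k := by rwa [sub_eq_zero] at hbz
      have hcz := JP.coeff_eq_zero_of_central F hyv
      have hFz : F ≠ 0 := fun hF => hFne (by rw [hF, JP.v_zero])
      have hFd0 : F.natDegree = 0 := by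
        by_contra hd
        exact (Polynomial.leadingCoeff_ne_zero.mpr hFz) (hcz F.natDegree (by omega))
      exact Nat.find_min hT0 (show 0 < n by omega) ⟨F, hFI, hFne, by omega⟩
    · -- strictly smaller degree element of I, contradicting minimality
      have hHne : H ≠ 0 := by
        intro hH
        apply hbz
        rw [hb, hHeq, hH, JP.v_zero]
      have hdeglt : H.natDegree < n := by
        rw [Polynomial.natDegree_lt_iff_degree_lt hHne]
        exact_mod_cast hHdeg
      refine Nat.find_min hT0 (m := H.natDegree) hdeglt ⟨H, ?_, ?_, le_rfl⟩
      · rw [← hHeq]; exact hbI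
      · rw [← hHeq]; exact hbz
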